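/- Let $x_1,\ldots,x_n$ be a basis of $\mathcal{K}^n$ over $\mathcal{K} = F((t))$, and for $1 \leq i \leq n$ let $L_i = \langle t^{-c_{i1}}x_1, \ldots, t^{-c_{in}}x_n\rangle_{\mathcal{O}}$ for integers $c_{ij}$ (so all $L_i$ lie in a common apartment). Then there exists a lattice $P$ (of the form $P = \langle t^{-b_1}x_1,\ldots,t^{-b_n}x_n\rangle_{\mathcal{O}}$ for integers $b_j$) such that $f^t_{1,1,\ldots,1}(L_1,\ldots,L_n) = \sum_{i=1}^n f^t_{1,n-1}(L_i, P) - (n-1) f^t_n(P)$. -/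

import Mathlib

noncomputable section

/-- A lattice in `K^n`, `K = F((t))`: a finitely generated `F[[t]]`-submodule
of full rank (it spans `K^n` over `K`). -/
def IsLattice {F : Type*} [Field F] {n : ℕ}
    (L : Submodule (PowerSeries F) (Fin n → LaurentSeries F)) : Prop :=
  L.FG ∧ Submodule.span (LaurentSeries F) (L : Set (Fin n → LaurentSeries F)) = ⊤

/-- The set of values `-val (det (v 0, …, v (n-1)))` over nonzero determinants of
vectors `v m` chosen from the lattices `X m` (column `m` from lattice `X m`). -/
def detValSet {F : Type*} [Field F] {n : ℕ}
    (X : Fin n → Submodule (PowerSeries F) (Fin n → LaurentSeries F)) : Set ℤ :=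
  {z | ∃ v : Fin n → Fin n → LaurentSeries F, (∀ m, v m ∈ X m) ∧
    (Matrix.of fun p m => v m p).det ≠ 0 ∧
    z = -((Matrix.of fun p m => v m p).det).order}

/-- Column pattern for two lattices: the first `i` columns from `X`, the rest
from `Y`; `detValSet (cols2 X Y i)` computes `fᵗ_{i,n-i}(X,Y)`. -/
def cols2 {F : Type*} [Field F] {n : ℕ}
    (X Y : Submodule (PowerSeries F) (Fin n → LaurentSeries F)) (i : ℕ) :
    Fin n → Submodule (PowerSeries F) (Fin n → LaurentSeries F) :=
  fun m => if (m : ℕ) < i then X else Y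

/-- Column pattern for three lattices: first `i` columns from `X`, next `j`
from `Y`, remaining from `Z`; `detValSet (cols3 X Y Z i j)` computes
`fᵗ_{i,j,k}(X,Y,Z)` for `k = n - i - j`. -/
def cols3 {F : Type*} [Field F] {n : ℕ}
    (X Y Z : Submodule (PowerSeries F) (Fin n → LaurentSeries F)) (i j : ℕ) :
    Fin n → Submodule (PowerSeries F) (Fin n → LaurentSeries F) :=
  fun m => if (m : ℕ) < i then X else if (m : ℕ) < i + j then Y else Z

/-- The lattice spanned by `t^{-c j} • x j` for a frame `x`. -/
def frameLattice {F : Type*} [Field F] {n : ℕ} (x : Fin n → (Fin n → LaurentSeries F))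
    (c : Fin n → ℤ) : Submodule (PowerSeries F) (Fin n → LaurentSeries F) :=
  Submodule.span (PowerSeries F)
    (Set.range fun j => (HahnSeries.single (-(c j)) (1 : F) : LaurentSeries F) • x j)

namespace ApartmentProof

open Finset HahnSeries

variable {F : Type*} [Field F] {n : ℕ}

lemma prod_single_one (s : Finset (Fin n)) (g : Fin n → ℤ) :
    (∏ m ∈ s, (HahnSeries.single (g m) (1 : F) : LaurentSeries F))
      = HahnSeries.single (∑ m ∈ s, g m) (1 : F) := by
  classical
  induction s using Finset.induction with
  | empty => simp
  | insert _ _ ha ih =>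
      rw [Finset.prod_insert ha, Finset.sum_insert ha, ih, HahnSeries.single_mul_single, one_mul]

lemma coeff_sum {α : Type*} (s : Finset α) (f : α → LaurentSeries F) (k : ℤ) :
    (∑ a ∈ s, f a).coeff k = ∑ a ∈ s, (f a).coeff k := by
  classical
  induction s using Finset.induction with
  | empty => simp
  | insert _ _ ha ih => rw [Finset.sum_insert ha, Finset.sum_insert ha, HahnSeries.coeff_add, ih]

lemma algebraMap_eq_coe (a : PowerSeries F) :
    algebraMap (PowerSeries F) (LaurentSeries F) a = HahnSeries.ofPowerSeries ℤ F a := by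
  rw [HahnSeries.algebraMap_apply']; simp

lemma order_algebraMap_nonneg {a : PowerSeries F}
    (h : algebraMap (PowerSeries F) (LaurentSeries F) a ≠ 0) :
    0 ≤ (algebraMap (PowerSeries F) (LaurentSeries F) a).order := by
  by_contra hlt
  push_neg at hlt
  have h2 := mt HahnSeries.coeff_order_eq_zero.mp h
  apply h2
  rw [algebraMap_eq_coe] at *
  have := PowerSeries.coeff_coe (f := a)
      (i := (HahnSeries.ofPowerSeries ℤ F a).order)
  rw [this, if_pos hlt]

lemma sign_cast_ne_zero (σ : Equiv.Perm (Fin n)) :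
    ((Equiv.Perm.sign σ : ℤ) : LaurentSeries F) ≠ 0 := by
  rcases Int.units_eq_one_or (Equiv.Perm.sign σ) with h | h <;> rw [h] <;> simp

lemma order_sign_mul (σ : Equiv.Perm (Fin n)) (y : LaurentSeries F) :
    (((Equiv.Perm.sign σ : ℤ) : LaurentSeries F) * y).order = y.order := by
  rcases Int.units_eq_one_or (Equiv.Perm.sign σ) with h | h <;> rw [h]
  · simp
  · rw [show ((((-1 : ℤˣ) : ℤ)) : LaurentSeries F) * y = -y by push_cast; ring,
      HahnSeries.order_neg]

end ApartmentProof

namespace ApartmentProof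
open Finset HahnSeries
variable {F : Type*} [Field F] {n : ℕ}

lemma hdetM (x : Fin n → (Fin n → LaurentSeries F))
    (hdet : (Matrix.of fun p j => x j p).det ≠ 0) (d : Fin n → Fin n → ℤ)
    (σs : Equiv.Perm (Fin n)) :
    (Matrix.of fun p m =>
        ((HahnSeries.single (-(d m (σs m))) (1 : F) : LaurentSeries F) • x (σs m)) p).det
      = HahnSeries.single (∑ m, -(d m (σs m))) (1 : F)
          * (((Equiv.Perm.sign σs : ℤ) : LaurentSeries F)
              * (Matrix.of fun p j => x j p).det) := by
  have hM : (Matrix.of fun p m =>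
      ((HahnSeries.single (-(d m (σs m))) (1 : F) : LaurentSeries F) • x (σs m)) p)
      = Matrix.of fun p m =>
        (HahnSeries.single (-(d m (σs m))) (1 : F) : LaurentSeries F)
          * ((Matrix.of fun p j => x j p).submatrix id σs) p m := rfl
  rw [hM, Matrix.det_mul_row, Matrix.det_permute', prod_single_one]

set_option maxHeartbeats 1000000 in
lemma frame_isGreatest (x : Fin n → (Fin n → LaurentSeries F))
    (hdet : (Matrix.of fun p j => x j p).det ≠ 0) (d : Fin n → Fin n → ℤ) :
    IsGreatest (detValSet fun m => frameLattice x (d m))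
      ((Finset.univ.sup' ⟨1, Finset.mem_univ 1⟩
          fun σ : Equiv.Perm (Fin n) => ∑ m, d m (σ m))
        - (Matrix.of fun p j => x j p).det.order) := by
  classical
  set X : Matrix (Fin n) (Fin n) (LaurentSeries F) := Matrix.of fun p j => x j p with hX
  set B : ℤ := Finset.univ.sup' ⟨1, Finset.mem_univ 1⟩
      (fun σ : Equiv.Perm (Fin n) => ∑ m, d m (σ m)) with hBdef
  obtain ⟨σs, -, hσs⟩ := Finset.exists_max_image Finset.univ
      (fun σ : Equiv.Perm (Fin n) => ∑ m, d m (σ m)) ⟨1, Finset.mem_univ 1⟩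
  have hB : B = ∑ m, d m (σs m) := by
    rw [hBdef]
    exact le_antisymm (Finset.sup'_le _ _ fun σ _ => hσs σ (Finset.mem_univ σ))
      (Finset.le_sup' (fun σ : Equiv.Perm (Fin n) => ∑ m, d m (σ m)) (Finset.mem_univ σs))
  constructor
  · refine ⟨fun m => (HahnSeries.single (-(d m (σs m))) (1 : F) : LaurentSeries F) • x (σs m),
      fun m => Submodule.subset_span ⟨σs m, rfl⟩, ?_, ?_⟩
    · rw [hdetM x hdet d σs]
      exact mul_ne_zero (HahnSeries.single_ne_zero one_ne_zero)
        (mul_ne_zero (sign_cast_ne_zero σs) hdet)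
    · rw [hdetM x hdet d σs, HahnSeries.order_mul (HahnSeries.single_ne_zero one_ne_zero)
        (mul_ne_zero (sign_cast_ne_zero σs) hdet), HahnSeries.order_single one_ne_zero,
        order_sign_mul, hB, Finset.sum_neg_distrib]
      ring
  · rintro z ⟨v, hv, hne, rfl⟩
    have hv' : ∀ m, ∃ aa : Fin n → PowerSeries F,
        ∑ j, aa j • ((HahnSeries.single (-(d m j)) (1 : F) : LaurentSeries F) • x j) = v m :=
      fun m => (Submodule.mem_span_range_iff_exists_fun _).1 (hv m)
    choose a ha using hv'
    set A : Fin n → Fin n → LaurentSeries F :=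
      fun m j => algebraMap (PowerSeries F) (LaurentSeries F) (a m j) with hA
    set w : Fin n → Fin n → (Fin n → LaurentSeries F) :=
      fun m j => (HahnSeries.single (-(d m j)) (1 : F) : LaurentSeries F) • x j with hw
    have hv2 : ∀ m, v m = ∑ j, A m j • w m j := by
      intro m
      rw [← ha m]
      exact Finset.sum_congr rfl fun j _ =>
        (algebraMap_smul (LaurentSeries F) (a m j) (w m j)).symm
    set f := (Matrix.detRowAlternating :
      (Fin n → LaurentSeries F) [⋀^Fin n]→ₗ[LaurentSeries F] LaurentSeries F) with hf
    have hMdet : (Matrix.of fun p m => v m p).det = f fun m => v m := by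
      rw [← Matrix.det_transpose]; rfl
    have hexp : (f fun m => v m) = ∑ r : Fin n → Fin n,
        (∏ m, A m (r m)) *
          ((∏ m, (HahnSeries.single (-(d m (r m))) (1 : F) : LaurentSeries F)) *
            f fun m => x (r m)) := by
      calc (f fun m => v m) = f fun m => ∑ j, A m j • w m j := by
            exact congrArg f (funext hv2)
        _ = ∑ r : Fin n → Fin n, f fun m => A m (r m) • w m (r m) :=
            f.toMultilinearMap.map_sum (g := fun m j => A m j • w m j)
        _ = _ := by
            refine Finset.sum_congr rfl fun r _ => ?_
            calc (f fun m => A m (r m) • w m (r m))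
                = (∏ m, A m (r m)) • f fun m => w m (r m) :=
                  f.toMultilinearMap.map_smul_univ _ _
              _ = (∏ m, A m (r m)) •
                    ((∏ m, (HahnSeries.single (-(d m (r m))) (1 : F) : LaurentSeries F)) •
                      f fun m => x (r m)) :=
                  congrArg (fun y => (∏ m, A m (r m)) • y)
                    (f.toMultilinearMap.map_smul_univ _ _)
              _ = _ := by rw [smul_eq_mul, smul_eq_mul]
    have hcoeff : ∀ k : ℤ, k < X.det.order - B → ((f fun m => v m)).coeff k = 0 := by
      intro k hk
      rw [hexp, coeff_sum]
      apply Finset.sum_eq_zero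
      intro r _
      by_cases ht : (∏ m, A m (r m)) *
          ((∏ m, (HahnSeries.single (-(d m (r m))) (1 : F) : LaurentSeries F)) *
            f fun m => x (r m)) = 0
      · rw [ht]; simp
      · have hP : (∏ m, A m (r m)) ≠ 0 := left_ne_zero_of_mul ht
        have hSG := right_ne_zero_of_mul ht
        have hG : (f fun m => x (r m)) ≠ 0 := right_ne_zero_of_mul hSG
        have hS : (∏ m, (HahnSeries.single (-(d m (r m))) (1 : F) : LaurentSeries F)) ≠ 0 :=
          left_ne_zero_of_mul hSG
        have hr : Function.Injective r := by
          by_contra hinj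
          apply hG
          rw [Function.not_injective_iff] at hinj
          obtain ⟨m1, m2, he, hne12⟩ := hinj
          exact AlternatingMap.map_eq_zero_of_eq f _ (show x (r m1) = x (r m2) by rw [he]) hne12
        obtain ⟨σr, hσr⟩ : ∃ σ : Equiv.Perm (Fin n), ∀ m, σ m = r m :=
          ⟨Equiv.ofBijective r ((Finite.injective_iff_bijective).1 hr), fun m => rfl⟩
        apply HahnSeries.coeff_eq_zero_of_lt_order
        have hPord : 0 ≤ (∏ m, A m (r m)).order := by
          have hprod : (∏ m, A m (r m)) =
              algebraMap (PowerSeries F) (LaurentSeries F) (∏ m, a m (r m)) :=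
            (map_prod _ _ _).symm
          rw [hprod] at hP ⊢
          exact order_algebraMap_nonneg hP
        have hSord : (∏ m, (HahnSeries.single (-(d m (r m))) (1 : F) : LaurentSeries F)).order
            = ∑ m, -(d m (r m)) := by
          rw [prod_single_one Finset.univ]
          exact HahnSeries.order_single one_ne_zero
        have hGval : (f fun m => x (r m)) =
            ((Equiv.Perm.sign σr : ℤ) : LaurentSeries F) * X.det := by
          have h1 : (f fun m => x (r m)) = f fun m => x (σr m) := by
            exact congrArg f (funext fun m => by rw [hσr m])
          have h2 : (f fun m => x (σr m)) =
              ((Matrix.of fun m p => x m p).submatrix σr id).det := rfl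
          have h3 : Matrix.transpose (Matrix.of fun m p => x m p) = X := rfl
          have h4 : (Matrix.of fun m p => x m p).det = X.det := by
            rw [← h3, Matrix.det_transpose]
          rw [h1, h2, Matrix.det_permute, h4]
        have hGord : (f fun m => x (r m)).order = X.det.order := by
          rw [hGval, order_sign_mul]
        have hle : ∑ m, d m (r m) ≤ B := by
          have h4 : ∑ m, d m (σr m) ≤ B := by
            rw [hBdef]
            exact Finset.le_sup' (fun σ : Equiv.Perm (Fin n) => ∑ m, d m (σ m))
              (Finset.mem_univ σr)
          calc ∑ m, d m (r m) = ∑ m, d m (σr m) :=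
                Finset.sum_congr rfl fun m _ => by rw [hσr m]
            _ ≤ B := h4
        rw [HahnSeries.order_mul hP hSG, HahnSeries.order_mul hS hG, hSord, hGord,
          Finset.sum_neg_distrib]
        linarith
    have horder : X.det.order - B ≤ ((Matrix.of fun p m => v m p).det).order := by
      by_contra hlt
      push_neg at hlt
      rw [hMdet] at hne hlt
      exact mt HahnSeries.coeff_order_eq_zero.mp hne (hcoeff _ hlt)
    linarith

end ApartmentProof

namespace ApartmentProof
open Finset
variable {F : Type*} [Field F] {n : ℕ}

def Phi (c : Fin n → Fin n → ℤ) (b : Fin n → ℤ) : ℤ :=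
  (∑ i, Finset.univ.sup' ⟨i, Finset.mem_univ i⟩ fun j => c i j - b j) + ∑ j, b j

lemma phi_lb (c : Fin n → Fin n → ℤ) (b : Fin n → ℤ) (σ : Equiv.Perm (Fin n)) :
    ∑ i, c i (σ i) ≤ Phi c b := by
  have h2 : ∑ i, (c i (σ i) - b (σ i)) ≤
      ∑ i, Finset.univ.sup' ⟨i, Finset.mem_univ i⟩ fun j => c i j - b j :=
    Finset.sum_le_sum fun i _ => Finset.le_sup' (fun j => c i j - b j) (Finset.mem_univ (σ i))
  have h3 : ∑ i, b (σ i) = ∑ j, b j := Equiv.sum_comp σ b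
  have h4 : ∑ i, (c i (σ i) - b (σ i)) = ∑ i, c i (σ i) - ∑ i, b (σ i) :=
    Finset.sum_sub_distrib _ _
  unfold Phi
  linarith

lemma exists_dual (c : Fin n → Fin n → ℤ) :
    ∃ b : Fin n → ℤ,
      (Finset.univ.sup' ⟨1, Finset.mem_univ 1⟩
          fun σ : Equiv.Perm (Fin n) => ∑ i, c i (σ i)) = Phi c b := by
  classical
  obtain ⟨z0, ⟨b0, hb0⟩, hmin⟩ := Int.exists_least_of_bdd
      (P := fun z => ∃ b : Fin n → ℤ, Phi c b = z)
      ⟨Finset.univ.sup' ⟨1, Finset.mem_univ 1⟩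
          fun σ : Equiv.Perm (Fin n) => ∑ i, c i (σ i),
        by rintro z ⟨b, rfl⟩; exact Finset.sup'_le _ _ fun σ _ => phi_lb c b σ⟩
      ⟨Phi c 0, 0, rfl⟩
  refine ⟨b0, le_antisymm (Finset.sup'_le _ _ fun σ _ => phi_lb c b0 σ) ?_⟩
  set m : Fin n → ℤ :=
    fun i => Finset.univ.sup' ⟨i, Finset.mem_univ i⟩ fun j => c i j - b0 j with hm
  set T : Fin n → Finset (Fin n) :=
    fun i => Finset.univ.filter fun j => c i j - b0 j = m i with hT
  by_cases hHall : ∀ s : Finset (Fin n), s.card ≤ (s.biUnion T).card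
  · obtain ⟨σf, hinj, hmem⟩ := (Finset.all_card_le_biUnion_card_iff_exists_injective T).1 hHall
    obtain ⟨σ, hσ⟩ : ∃ σ : Equiv.Perm (Fin n), ∀ i, σ i = σf i :=
      ⟨Equiv.ofBijective σf ((Finite.injective_iff_bijective).1 hinj), fun _ => rfl⟩
    have hval : ∀ i, c i (σ i) = m i + b0 (σ i) := by
      intro i
      have := (Finset.mem_filter.1 (hmem i)).2
      rw [hσ i]
      omega
    have hPhi : Phi c b0 = ∑ i, c i (σ i) := by
      unfold Phi
      rw [Finset.sum_congr rfl fun i (_ : i ∈ Finset.univ) => hval i, Finset.sum_add_distrib,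
        Equiv.sum_comp σ b0]
    rw [hPhi]
    exact Finset.le_sup' (fun σ : Equiv.Perm (Fin n) => ∑ i, c i (σ i)) (Finset.mem_univ σ)
  · exfalso
    push_neg at hHall
    obtain ⟨s, hs⟩ := hHall
    set N : Finset (Fin n) := s.biUnion T with hN
    set b1 : Fin n → ℤ := fun j => if j ∈ N then b0 j + 1 else b0 j with hb1
    have hkey : ∀ i j : Fin n, c i j - b1 j ≤ (if i ∈ s then m i - 1 else m i) := by
      intro i j
      have hle : c i j - b0 j ≤ m i := Finset.le_sup' (fun j => c i j - b0 j) (Finset.mem_univ j)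
      by_cases his : i ∈ s
      · by_cases hjN : j ∈ N
        · simp only [hb1, if_pos hjN, if_pos his]
          omega
        · have hjT : j ∉ T i := fun h => hjN (Finset.mem_biUnion.2 ⟨i, his, h⟩)
          have hne : c i j - b0 j ≠ m i := by
            intro h
            exact hjT (Finset.mem_filter.2 ⟨Finset.mem_univ j, h⟩)
          simp only [hb1, if_neg hjN, if_pos his]
          omega
      · simp only [hb1, if_neg his]
        split_ifs with hjN <;> omega
    have hsum_b1 : ∑ j, b1 j = (∑ j, b0 j) + N.card := by
      have : ∀ j : Fin n, b1 j = b0 j + (if j ∈ N then (1 : ℤ) else 0) := by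
        intro j; simp only [hb1]; split_ifs <;> omega
      rw [Finset.sum_congr rfl fun j (_ : j ∈ Finset.univ) => this j,
        Finset.sum_add_distrib, Finset.sum_ite_mem, Finset.univ_inter, Finset.sum_const,
        nsmul_eq_mul, mul_one]
    have hsum_u : ∑ i, (if i ∈ s then m i - 1 else m i) = (∑ i, m i) - s.card := by
      have : ∀ i : Fin n, (if i ∈ s then m i - 1 else m i)
          = m i - (if i ∈ s then (1 : ℤ) else 0) := by
        intro i; split_ifs <;> omega
      rw [Finset.sum_congr rfl fun i (_ : i ∈ Finset.univ) => this i,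
        Finset.sum_sub_distrib, Finset.sum_ite_mem, Finset.univ_inter, Finset.sum_const,
        nsmul_eq_mul, mul_one]
    have hPhi1 : Phi c b1 ≤ Phi c b0 + (N.card : ℤ) - s.card := by
      unfold Phi
      have h1 : (∑ i, Finset.univ.sup' ⟨i, Finset.mem_univ i⟩ fun j => c i j - b1 j)
          ≤ ∑ i, (if i ∈ s then m i - 1 else m i) :=
        Finset.sum_le_sum fun i _ => Finset.sup'_le _ _ fun j _ => hkey i j
      rw [hsum_b1]
      have := hsum_u
      simp only [hm] at this h1
      linarith
    have hlt : Phi c b1 < Phi c b0 := by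
      have : (N.card : ℤ) < s.card := by exact_mod_cast hs
      linarith
    have := hmin (Phi c b1) ⟨b1, rfl⟩
    rw [← hb0] at this
    linarith

end ApartmentProof

/-- Theorem (apartments), case of `n` lattices with all multiplicities `1`: if
`L 0, …, L (n-1)` lie in a common apartment (given by a frame `x`), there is a
lattice `P = ⟨t^{-b 0} x 0, …, t^{-b (n-1)} x (n-1)⟩` in the same apartment with
`fᵗ_{1,…,1}(L 0,…,L (n-1)) = ∑ᵢ fᵗ_{1,n-1}(L i, P) - (n-1) fᵗₙ(P)`. -/
theorem apartment_network_formula {F : Type*} [Field F] {n : ℕ}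
    (x : Fin n → (Fin n → LaurentSeries F))
    (hx_ind : LinearIndependent (LaurentSeries F) x)
    (hx_span : Submodule.span (LaurentSeries F) (Set.range x) = ⊤)
    (c : Fin n → Fin n → ℤ)
    (L : Fin n → Submodule (PowerSeries F) (Fin n → LaurentSeries F))
    (hL : ∀ i, L i = frameLattice x (c i)) :
    ∃ b : Fin n → ℤ, ∃ (fAll : ℤ) (g : Fin n → ℤ) (e : ℤ),
      IsGreatest (detValSet L) fAll ∧
      (∀ i, IsGreatest (detValSet (cols2 (L i) (frameLattice x b) 1)) (g i)) ∧
      IsGreatest (detValSet (fun _ => frameLattice x b)) e ∧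
      fAll = (∑ i, g i) - ((n : ℤ) - 1) * e := by
  classical
  have hdet : (Matrix.of fun p j => x j p).det ≠ 0 := by
    have hbas : IsUnit ((Pi.basisFun (LaurentSeries F) (Fin n)).det x) :=
      (Module.Basis.is_basis_iff_det (Pi.basisFun (LaurentSeries F) (Fin n))).mp ⟨hx_ind, hx_span⟩
    have hmat : (Pi.basisFun (LaurentSeries F) (Fin n)).toMatrix x
        = Matrix.of fun p j => x j p := by
      ext p j
      simp [Module.Basis.toMatrix_apply]
    rw [Module.Basis.det_apply, hmat] at hbas
    exact hbas.ne_zero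
  obtain ⟨b, hb⟩ := ApartmentProof.exists_dual c
  have hL' : L = fun m => frameLattice x (c m) := funext hL
  refine ⟨b,
    (Finset.univ.sup' ⟨1, Finset.mem_univ 1⟩
        fun σ : Equiv.Perm (Fin n) => ∑ m : Fin n, c m (σ m))
      - (Matrix.of fun p j => x j p).det.order,
    fun i => (Finset.univ.sup' ⟨1, Finset.mem_univ 1⟩
        fun σ : Equiv.Perm (Fin n) =>
          ∑ m : Fin n, (fun m : Fin n => if (m : ℕ) < 1 then c i else b) m (σ m))
      - (Matrix.of fun p j => x j p).det.order,
    (∑ j, b j) - (Matrix.of fun p j => x j p).det.order,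
    ?_, ?_, ?_, ?_⟩
  · rw [hL']
    exact ApartmentProof.frame_isGreatest x hdet c
  · intro i
    have hc2 : cols2 (L i) (frameLattice x b) 1
        = fun m : Fin n => frameLattice x ((fun m : Fin n => if (m : ℕ) < 1 then c i else b) m) := by
      funext m
      rw [cols2, hL i]
      exact (apply_ite (frameLattice x) _ _ _).symm
    rw [hc2]
    exact ApartmentProof.frame_isGreatest x hdet _
  · have h5 : (Finset.univ.sup' ⟨1, Finset.mem_univ 1⟩
        fun σ : Equiv.Perm (Fin n) => ∑ m : Fin n, b (σ m)) = ∑ j, b j := by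
      refine le_antisymm (Finset.sup'_le _ _ fun σ _ => le_of_eq (Equiv.sum_comp σ b)) ?_
      have h6 := Finset.le_sup' (fun σ : Equiv.Perm (Fin n) => ∑ m : Fin n, b (σ m))
        (Finset.mem_univ (1 : Equiv.Perm (Fin n)))
      simpa using h6
    rw [← h5]
    exact ApartmentProof.frame_isGreatest x hdet (fun _ => b)
  · have hinner : ∀ i : Fin n,
        (Finset.univ.sup' ⟨1, Finset.mem_univ 1⟩
          fun σ : Equiv.Perm (Fin n) =>
            ∑ m : Fin n, (fun m : Fin n => if (m : ℕ) < 1 then c i else b) m (σ m))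
        = (Finset.univ.sup' ⟨i, Finset.mem_univ i⟩ fun j => c i j - b j) + ∑ j, b j := by
      intro i
      haveI : NeZero n := ⟨by rintro rfl; exact i.elim0⟩
      have hσval : ∀ σ : Equiv.Perm (Fin n),
          (∑ m : Fin n, (fun m : Fin n => if (m : ℕ) < 1 then c i else b) m (σ m))
            = (c i (σ 0) - b (σ 0)) + ∑ j, b j := by
        intro σ
        have e1 : ∀ m : Fin n, (fun m : Fin n => if (m : ℕ) < 1 then c i else b) m (σ m)
            = b (σ m) + (if m = 0 then c i (σ m) - b (σ m) else 0) := by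
          intro m
          by_cases hm : m = 0
          · subst hm
            simp
          · have hnl : ¬ ((m : ℕ) < 1) := by
              rw [Nat.lt_one_iff]
              exact fun h => hm (Fin.val_injective (by simpa using h))
            simp [hnl, hm]
        rw [Finset.sum_congr rfl fun m (_ : m ∈ Finset.univ) => e1 m, Finset.sum_add_distrib,
          Finset.sum_ite_eq' Finset.univ (0 : Fin n) (fun m => c i (σ m) - b (σ m)),
          if_pos (Finset.mem_univ _), Equiv.sum_comp σ b]
        ring
      refine le_antisymm (Finset.sup'_le _ _ fun σ _ => ?_) ?_
      · rw [hσval σ]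
        have h7 := Finset.le_sup' (fun j => c i j - b j) (Finset.mem_univ (σ 0))
        linarith
      · have h8 : ∀ j : Fin n, c i j - b j ≤
            (Finset.univ.sup' ⟨1, Finset.mem_univ 1⟩
              fun σ : Equiv.Perm (Fin n) =>
                ∑ m : Fin n, (fun m : Fin n => if (m : ℕ) < 1 then c i else b) m (σ m))
              - ∑ j, b j := by
          intro j
          have h9 := Finset.le_sup'
            (fun σ : Equiv.Perm (Fin n) =>
              ∑ m : Fin n, (fun m : Fin n => if (m : ℕ) < 1 then c i else b) m (σ m))
            (Finset.mem_univ (Equiv.swap (0 : Fin n) j))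
          rw [hσval (Equiv.swap (0 : Fin n) j), Equiv.swap_apply_left] at h9
          linarith
        have h10 := Finset.sup'_le (⟨i, Finset.mem_univ i⟩ :
            (Finset.univ : Finset (Fin n)).Nonempty) (fun j => c i j - b j)
            fun j _ => h8 j
        linarith
    have hsum : ∑ i : Fin n, ((Finset.univ.sup' ⟨1, Finset.mem_univ 1⟩
          fun σ : Equiv.Perm (Fin n) =>
            ∑ m : Fin n, (fun m : Fin n => if (m : ℕ) < 1 then c i else b) m (σ m))
        - (Matrix.of fun p j => x j p).det.order)
      = (∑ i : Fin n, Finset.univ.sup' ⟨i, Finset.mem_univ i⟩ fun j => c i j - b j)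
        + (n : ℤ) * ((∑ j, b j) - (Matrix.of fun p j => x j p).det.order) := by
      have e2 : ∀ i : Fin n,
          (Finset.univ.sup' ⟨1, Finset.mem_univ 1⟩
            fun σ : Equiv.Perm (Fin n) =>
              ∑ m : Fin n, (fun m : Fin n => if (m : ℕ) < 1 then c i else b) m (σ m))
          - (Matrix.of fun p j => x j p).det.order
          = (Finset.univ.sup' ⟨i, Finset.mem_univ i⟩ fun j => c i j - b j)
            + ((∑ j, b j) - (Matrix.of fun p j => x j p).det.order) := by
        intro i
        rw [hinner i]
        ring
      rw [Finset.sum_congr rfl fun i (_ : i ∈ Finset.univ) => e2 i, Finset.sum_add_distrib,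
        Finset.sum_const, Finset.card_univ, Fintype.card_fin, nsmul_eq_mul]
    rw [hb]
    unfold ApartmentProof.Phi
    rw [hsum]
    ring

end
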